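/- Let φ ∈ ℂ[z_1,…,z_h] be a homogeneous polynomial of degree 3, v ∈ ℂ^h, let T_v be the linear map on ℂ^{2h+2} defined by T_v f_0 = f_0 + Σ_i v_i f_i + Σ_i (∂φ/∂z_i)(v)e_i − φ(v)e_0, T_v f_i = f_i + Σ_j (∂²φ/∂z_i∂z_j)(v)e_j − (∂φ/∂z_i)(v)e_0, T_v e_i = e_i − v_i e_0, T_v e_0 = e_0, and let N = T_v − Id. Then: (i) N = 0 if and only if v = 0; (ii) N² = 0 if and only if (∂φ/∂z_i)(v) = 0 for every i ∈ {1,…,h} (so that N² = 0 and N ≠ 0 holds exactly when v ≠ 0 and v represents a singular point of the cubic hypersurface V(φ), noting that by Euler's relation the vanishing of all partial derivatives at v forces φ(v) = 0); and (iii) N³ = 0 if and only if φ(v) = 0 (so N³ ≠ 0 exactly when v does not lie on V(φ)). -/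

import Mathlib

open MvPolynomial

/-- The linear map `T_v` on `ℂ^{2h+2}` (coordinates recorded as the pair of
`e_0, e_1, …, e_h`-coordinates and `f_0, f_1, …, f_h`-coordinates) determined by
`T_v f_0 = f_0 + Σ v_i f_i + Σ (∂φ/∂z_i)(v) e_i − φ(v) e_0`,
`T_v f_i = f_i + Σ_j (∂²φ/∂z_i∂z_j)(v) e_j − (∂φ/∂z_i)(v) e_0`,
`T_v e_i = e_i − v_i e_0`, `T_v e_0 = e_0`. -/
noncomputable def Tmap {h : ℕ} (φ : MvPolynomial (Fin h) ℂ) (v : Fin h → ℂ)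
    (x : (Fin (h+1) → ℂ) × (Fin (h+1) → ℂ)) : (Fin (h+1) → ℂ) × (Fin (h+1) → ℂ) :=
  (Fin.cons
      (x.1 0 - x.2 0 * aeval v φ - (∑ i, x.2 i.succ * aeval v (pderiv i φ))
        - ∑ i, x.1 i.succ * v i)
      (fun j => x.1 j.succ + x.2 0 * aeval v (pderiv j φ)
        + ∑ i, x.2 i.succ * aeval v (pderiv i (pderiv j φ))),
    Fin.cons (x.2 0) (fun i => x.2 i.succ + x.2 0 * v i))

/-- `N = T_v − Id`. -/
noncomputable def Nmap {h : ℕ} (φ : MvPolynomial (Fin h) ℂ) (v : Fin h → ℂ)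
    (x : (Fin (h+1) → ℂ) × (Fin (h+1) → ℂ)) : (Fin (h+1) → ℂ) × (Fin (h+1) → ℂ) :=
  Tmap φ v x - x

/-- For a homogeneous cubic `φ` and `N = T_v − Id`:
`N = 0 ↔ v = 0`; `N² = 0 ↔ (∂φ/∂z_i)(v) = 0` for all `i` (i.e. `v` is a singular
point of the cubic `V(φ)` when `v ≠ 0`); `N³ = 0 ↔ φ(v) = 0` (i.e. `v` lies on
`V(φ)`). -/

lemma myPderivComm {h : ℕ} (i j : Fin h) (f : MvPolynomial (Fin h) ℂ) :
    pderiv i (pderiv j f) = pderiv j (pderiv i f) := by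
  induction f using MvPolynomial.induction_on' with
  | monomial s a =>
    rcases eq_or_ne i j with rfl | hij
    · rfl
    · simp only [pderiv_monomial]
      have h1 : (s - Finsupp.single j 1 : Fin h →₀ ℕ) i = s i := by
        simp [Finsupp.single_apply, hij.symm]
      have h2 : (s - Finsupp.single i 1 : Fin h →₀ ℕ) j = s j := by
        simp [Finsupp.single_apply, hij]
      have h3 : s - Finsupp.single j 1 - Finsupp.single i 1
          = s - Finsupp.single i 1 - Finsupp.single j 1 := by
        ext k; simp; omega
      rw [h1, h2, h3]; ring_nf
  | add p q hp hq => simp [hp, hq]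


lemma myPderivHomog {h n : ℕ} (i : Fin h) {φ : MvPolynomial (Fin h) ℂ}
    (hφ : φ.IsHomogeneous (n+1)) : (pderiv i φ).IsHomogeneous n := by
  conv_lhs => rw [← φ.support_sum_monomial_coeff]
  rw [map_sum]
  apply IsHomogeneous.sum
  intro d hd
  rw [pderiv_monomial]
  rcases Nat.eq_zero_or_pos (d i) with h0 | hpos
  · simp only [h0, Nat.cast_zero, mul_zero, monomial_zero]
    exact isHomogeneous_zero _ _ _
  · apply isHomogeneous_monomial
    have hle : Finsupp.single i 1 ≤ d := by
      rw [Finsupp.single_le_iff]; exact hpos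
    have hd2 : d - Finsupp.single i 1 + Finsupp.single i 1 = d := tsub_add_cancel_of_le hle
    have hdd : d.degree = n + 1 := by
      simp only [Finsupp.degree_eq_weight_one]; exact hφ (MvPolynomial.mem_support_iff.1 hd)
    have hdeg : (d - Finsupp.single i 1).degree + (Finsupp.single i 1).degree = d.degree := by
      simp only [Finsupp.degree_eq_weight_one]
      rw [← map_add, hd2]
    have hs1 : (Finsupp.single i (1:ℕ)).degree = 1 := by
      rw [Finsupp.degree_apply, Finsupp.support_single_ne_zero _ one_ne_zero]
      simp
    omega

lemma myKey {h : ℕ} (v : Fin h → ℂ) (i : Fin h) (d : Fin h →₀ ℕ) (a : ℂ) :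
    v i * aeval v (pderiv i (monomial d a)) = (d i : ℂ) * aeval v (monomial d a) := by
  rcases Nat.eq_zero_or_pos (d i) with h0 | hpos
  · simp [pderiv_monomial, h0]
  · have hle : Finsupp.single i 1 ≤ d := by
      rw [Finsupp.single_le_iff]; exact hpos
    have hd2 : d - Finsupp.single i 1 + Finsupp.single i 1 = d := tsub_add_cancel_of_le hle
    have hprod : (d.prod fun j k => v j ^ k)
        = ((d - Finsupp.single i 1).prod fun j k => v j ^ k) * v i := by
      conv_lhs => rw [← hd2]
      rw [Finsupp.prod_add_index' (fun _ => pow_zero _) (fun _ _ _ => pow_add _ _ _)]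
      congr 1
      simp
    rw [pderiv_monomial, aeval_monomial, aeval_monomial, hprod]
    push_cast
    ring

lemma myEuler {h n : ℕ} (v : Fin h → ℂ) {φ : MvPolynomial (Fin h) ℂ}
    (hφ : φ.IsHomogeneous n) :
    ∑ i, v i * aeval v (pderiv i φ) = n * aeval v φ := by
  conv_lhs => rw [← φ.support_sum_monomial_coeff]
  conv_rhs => rw [← φ.support_sum_monomial_coeff]
  simp_rw [map_sum, Finset.mul_sum]
  rw [Finset.sum_comm]
  apply Finset.sum_congr rfl
  intro d hd
  simp_rw [myKey]
  rw [← Finset.sum_mul]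
  congr 1
  have h1 : d.degree = n := by
    simp only [Finsupp.degree_eq_weight_one]; exact hφ (MvPolynomial.mem_support_iff.1 hd)
  have h2 : ∑ i, (d i : ℂ) = (d.degree : ℂ) := by
    rw [Finsupp.degree_apply]
    rw [← Finset.sum_subset (Finset.subset_univ d.support)]
    · push_cast; rfl
    · intro x _ hx
      exact_mod_cast congrArg Nat.cast (Finsupp.notMem_support_iff.1 hx)
  rw [h2, h1]

lemma myAeval0 {h n : ℕ} (hn : n ≠ 0) {φ : MvPolynomial (Fin h) ℂ}
    (hφ : φ.IsHomogeneous n) : aeval (0 : Fin h → ℂ) φ = 0 := by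
  rw [MvPolynomial.aeval_zero]
  have hc : coeff 0 φ = 0 := hφ.coeff_eq_zero (by simp [map_zero]; omega)
  have : constantCoeff φ = coeff 0 φ := rfl
  simp [this, hc]

section components
variable {h : ℕ} {φ : MvPolynomial (Fin h) ℂ} {v : Fin h → ℂ}



lemma Nc1z (x : (Fin (h+1) → ℂ) × (Fin (h+1) → ℂ)) :
    (Nmap φ v x).1 0 = -(x.2 0 * aeval v φ) - (∑ i, x.2 i.succ * aeval v (pderiv i φ))
      - ∑ i, x.1 i.succ * v i := by
  simp [Nmap, Tmap]
  ring

lemma Nc1s (x : (Fin (h+1) → ℂ) × (Fin (h+1) → ℂ)) (j : Fin h) :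
    (Nmap φ v x).1 j.succ = x.2 0 * aeval v (pderiv j φ)
      + ∑ i, x.2 i.succ * aeval v (pderiv i (pderiv j φ)) := by
  simp [Nmap, Tmap]; ring

lemma Nc2z (x : (Fin (h+1) → ℂ) × (Fin (h+1) → ℂ)) : (Nmap φ v x).2 0 = 0 := by
  simp [Nmap, Tmap]

lemma Nc2s (x : (Fin (h+1) → ℂ) × (Fin (h+1) → ℂ)) (i : Fin h) :
    (Nmap φ v x).2 i.succ = x.2 0 * v i := by
  simp [Nmap, Tmap]

lemma Nsq (hφ : φ.IsHomogeneous 3)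
    (E3 : ∑ i, v i * aeval v (pderiv i φ) = 3 * aeval v φ)
    (E2 : ∀ j, ∑ i, v i * aeval v (pderiv i (pderiv j φ)) = 2 * aeval v (pderiv j φ))
    (Hcomm : ∀ i j, pderiv i (pderiv j φ) = pderiv j (pderiv i φ))
    (x : (Fin (h+1) → ℂ) × (Fin (h+1) → ℂ)) :
    Nmap φ v (Nmap φ v x) =
      (Fin.cons (-(6 * x.2 0 * aeval v φ) - 2 * ∑ k, x.2 k.succ * aeval v (pderiv k φ))
        (fun j => 2 * (x.2 0 * aeval v (pderiv j φ))), 0) := by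
  apply Prod.ext
  · funext j
    refine Fin.cases ?_ ?_ j
    · rw [Nc1z]
      simp_rw [Nc2z, Nc2s, Nc1s, Fin.cons_zero]
      have hA : ∑ i, x.2 0 * v i * aeval v (pderiv i φ)
          = x.2 0 * (3 * aeval v φ) := by
        simp_rw [mul_assoc]
        rw [← Finset.mul_sum, E3]
      have hB : ∑ i, (x.2 0 * aeval v (pderiv i φ)
            + ∑ k, x.2 k.succ * aeval v (pderiv k (pderiv i φ))) * v i
          = x.2 0 * (3 * aeval v φ)
            + ∑ k, x.2 k.succ * (2 * aeval v (pderiv k φ)) := by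
        simp_rw [add_mul, Finset.sum_add_distrib]
        congr 1
        · have : ∀ i, x.2 0 * aeval v (pderiv i φ) * v i
              = x.2 0 * (v i * aeval v (pderiv i φ)) := fun i => by ring
          simp_rw [this]
          rw [← Finset.mul_sum, E3]
        · simp_rw [Finset.sum_mul]
          rw [Finset.sum_comm]
          apply Finset.sum_congr rfl
          intro k _
          have : ∀ i, x.2 k.succ * aeval v (pderiv k (pderiv i φ)) * v i
              = x.2 k.succ * (v i * aeval v (pderiv i (pderiv k φ))) := by
            intro i; rw [Hcomm k i]; ring
          simp_rw [this]
          rw [← Finset.mul_sum, E2 k]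
      rw [hA, hB, Finset.mul_sum]
      have : ∀ k : Fin h, 2 * (x.2 k.succ * aeval v (pderiv k φ))
          = x.2 k.succ * (2 * aeval v (pderiv k φ)) := fun k => by ring
      simp_rw [this]
      ring
    · intro j
      rw [Nc1s]
      simp_rw [Nc2z, Nc2s, Fin.cons_succ]
      have : ∀ i, x.2 0 * v i * aeval v (pderiv i (pderiv j φ))
          = x.2 0 * (v i * aeval v (pderiv i (pderiv j φ))) := fun i => by ring
      simp_rw [this]
      rw [← Finset.mul_sum, E2 j]
      ring
  · funext j
    refine Fin.cases ?_ ?_ j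
    · rw [Nc2z]; rfl
    · intro i
      rw [Nc2s, Nc2z]
      simp

lemma Ncube (hφ : φ.IsHomogeneous 3)
    (E3 : ∑ i, v i * aeval v (pderiv i φ) = 3 * aeval v φ)
    (E2 : ∀ j, ∑ i, v i * aeval v (pderiv i (pderiv j φ)) = 2 * aeval v (pderiv j φ))
    (Hcomm : ∀ i j, pderiv i (pderiv j φ) = pderiv j (pderiv i φ))
    (x : (Fin (h+1) → ℂ) × (Fin (h+1) → ℂ)) :
    Nmap φ v (Nmap φ v (Nmap φ v x)) =
      (Fin.cons (-(6 * x.2 0 * aeval v φ)) (fun _ => 0), 0) := by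
  rw [Nsq hφ E3 E2 Hcomm x]
  apply Prod.ext
  · funext j
    refine Fin.cases ?_ ?_ j
    · rw [Nc1z]
      simp only [Fin.cons_zero, Fin.cons_succ, Pi.zero_apply, zero_mul, mul_zero,
        Finset.sum_const_zero, neg_zero, zero_sub, sub_zero]
      have : ∀ i : Fin h, 2 * (x.2 0 * aeval v (pderiv i φ)) * v i
          = (2 * x.2 0) * (v i * aeval v (pderiv i φ)) := fun i => by ring
      simp_rw [this]
      rw [← Finset.mul_sum, E3]
      ring
    · intro j
      rw [Nc1s]
      simp [Fin.cons_succ]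
  · funext j
    refine Fin.cases ?_ ?_ j
    · rw [Nc2z]; rfl
    · intro i
      rw [Nc2s]
      simp

end components

theorem stmt11 {h : ℕ} (hh : 1 ≤ h) (φ : MvPolynomial (Fin h) ℂ)
    (hφ : φ.IsHomogeneous 3) (v : Fin h → ℂ) :
    ((∀ x, Nmap φ v x = 0) ↔ v = 0) ∧
    ((∀ x, Nmap φ v (Nmap φ v x) = 0) ↔ ∀ i, aeval v (pderiv i φ) = 0) ∧
    ((∀ x, Nmap φ v (Nmap φ v (Nmap φ v x)) = 0) ↔ aeval v φ = 0) := by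
  classical
  have Hcomm : ∀ i j, pderiv i (pderiv j φ) = pderiv j (pderiv i φ) :=
    fun i j => myPderivComm i j φ
  have hφ2 : ∀ j, (pderiv j φ).IsHomogeneous 2 := fun j => myPderivHomog j hφ
  have E3 : ∑ i, v i * aeval v (pderiv i φ) = 3 * aeval v φ := by
    have := myEuler v hφ; push_cast at this; exact this
  have E2 : ∀ j, ∑ i, v i * aeval v (pderiv i (pderiv j φ)) = 2 * aeval v (pderiv j φ) := by
    intro j; have := myEuler v (hφ2 j); push_cast at this; exact this
  refine ⟨⟨?_, ?_⟩, ⟨?_, ?_⟩, ⟨?_, ?_⟩⟩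
  · -- N = 0 → v = 0
    intro hN
    funext i
    have h1 := hN ((0 : Fin (h+1) → ℂ), Fin.cons 1 0)
    have h2 := congrFun (congrArg Prod.snd h1) i.succ
    rw [Nc2s] at h2
    simpa using h2
  · -- v = 0 → N = 0
    intro hv
    subst hv
    have P0 : aeval (0 : Fin h → ℂ) φ = 0 := myAeval0 (by norm_num) hφ
    have D0 : ∀ i, aeval (0 : Fin h → ℂ) (pderiv i φ) = 0 :=
      fun i => myAeval0 (by norm_num) (hφ2 i)
    have H0 : ∀ i j, aeval (0 : Fin h → ℂ) (pderiv i (pderiv j φ)) = 0 :=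
      fun i j => myAeval0 (by norm_num) (myPderivHomog i (hφ2 j))
    intro x
    apply Prod.ext
    · funext j
      refine Fin.cases ?_ ?_ j
      · rw [Nc1z]; simp [P0, D0]
      · intro j; rw [Nc1s]; simp [D0, H0]
    · funext j
      refine Fin.cases ?_ ?_ j
      · rw [Nc2z]; rfl
      · intro i; rw [Nc2s]; simp
  · -- N² = 0 → ∂φ(v) = 0
    intro hN i
    have h1 := hN ((0 : Fin (h+1) → ℂ), Fin.cons 1 0)
    rw [Nsq hφ E3 E2 Hcomm] at h1
    have h2 := congrFun (congrArg Prod.fst h1) i.succ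
    simpa using h2
  · -- ∂φ(v) = 0 → N² = 0
    intro hD
    have P0 : aeval v φ = 0 := by
      have h3 := E3
      simp only [hD, mul_zero, Finset.sum_const_zero] at h3
      have := mul_eq_zero.mp h3.symm
      simpa using this.resolve_left (by norm_num)
    intro x
    rw [Nsq hφ E3 E2 Hcomm]
    apply Prod.ext
    · funext j
      refine Fin.cases ?_ ?_ j <;> simp [hD, P0]
    · rfl
  · -- N³ = 0 → φ(v) = 0
    intro hN
    have h1 := hN ((0 : Fin (h+1) → ℂ), Fin.cons 1 0)
    rw [Ncube hφ E3 E2 Hcomm] at h1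
    have h2 := congrFun (congrArg Prod.fst h1) 0
    simpa using h2
  · -- φ(v) = 0 → N³ = 0
    intro hP x
    rw [Ncube hφ E3 E2 Hcomm]
    apply Prod.ext
    · funext j
      refine Fin.cases ?_ ?_ j <;> simp [hP]
    · rfl
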